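/- Let G be a linearly ordered abelian group, let g_1, …, g_t ∈ G, and let N, n ∈ ℕ. Then there exist real numbers ĝ_1, …, ĝ_t ∈ ℝ such that for all integers α_1, …, α_t with |α_i| ≤ 2(N+n) for every i: α_1·g_1 + … + α_t·g_t ≤ 0 in G if and only if α_1·ĝ_1 + … + α_t·ĝ_t ≤ 0 in ℝ. -/

import Mathlib

open Finset

private def castVec {m : ℕ} (v : Fin m → ℚ) : Fin m → ℝ := fun i => (v i : ℝ)

private lemma rat_mem_span {m : ℕ} (s : Set (Fin m → ℚ)) (b : Fin m → ℚ)
    (h : castVec b ∈ Submodule.span ℝ (castVec '' s)) :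
    b ∈ Submodule.span ℚ s := by
  classical
  set U := Submodule.span ℚ s with hU
  obtain ⟨U', hcompl⟩ := Submodule.exists_isCompl U
  set pr : (Fin m → ℚ) →ₗ[ℚ] (Fin m → ℚ) :=
    U.subtype ∘ₗ (Submodule.linearProjOfIsCompl U U' hcompl) with hprdef
  have hpr_mem : ∀ x, pr x ∈ U := fun x => (Submodule.linearProjOfIsCompl U U' hcompl x).2
  have hpr_id : ∀ x ∈ U, pr x = x := by
    intro x hx
    have h2 := Submodule.linearProjOfIsCompl_apply_left hcompl (⟨x, hx⟩ : U)
    calc pr x = ((Submodule.projectionOnto U U' hcompl ((⟨x, hx⟩ : U) : Fin m → ℚ)) :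
          Fin m → ℚ) := rfl
      _ = ((⟨x, hx⟩ : U) : Fin m → ℚ) := by rw [h2]
      _ = x := rfl
  set M : Matrix (Fin m) (Fin m) ℚ := LinearMap.toMatrix' pr with hM
  have hMpr : ∀ x, pr x = M.mulVec x := by
    intro x
    rw [hM, ← Matrix.toLin'_apply, Matrix.toLin'_toMatrix']
  set prR : (Fin m → ℝ) →ₗ[ℝ] (Fin m → ℝ) := Matrix.toLin' (M.map (fun q => (q : ℝ))) with hprR
  have compat : ∀ x : Fin m → ℚ, prR (castVec x) = castVec (pr x) := by
    intro x
    funext i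
    rw [hprR, Matrix.toLin'_apply]
    show (M.map _).mulVec (castVec x) i = castVec (pr x) i
    rw [show castVec (pr x) i = ((pr x i : ℚ) : ℝ) from rfl, hMpr]
    simp only [Matrix.mulVec, dotProduct, Matrix.map_apply, castVec]
    push_cast
    rfl
  have hle : Submodule.span ℝ (castVec '' s) ≤ LinearMap.eqLocus prR LinearMap.id := by
    rw [Submodule.span_le]
    rintro x ⟨v, hv, rfl⟩
    show prR (castVec v) = castVec v
    rw [compat, hpr_id v (Submodule.subset_span hv)]
  have hb : prR (castVec b) = castVec b := hle h
  have hb' : castVec (pr b) = castVec b := by rw [← compat]; exact hb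
  have hpb : pr b = b := by
    funext i
    have h3 := congrFun hb' i
    simp only [castVec] at h3
    exact_mod_cast h3
  rw [← hpb]
  exact hpr_mem b

private lemma gordan {t : ℕ} (P : Finset (Fin t → ℤ))
    (hP : ∀ m : (Fin t → ℤ) → ℕ, (∑ p ∈ P, (m p : ℤ) • p) = 0 → ∀ p ∈ P, m p = 0) :
    ∃ gr : Fin t → ℝ, ∀ p ∈ P, 0 < ∑ i, (p i : ℝ) * gr i := by
  classical
  set E := EuclideanSpace ℝ (Fin t) with hE
  set L : E ≃ₗ[ℝ] (Fin t → ℝ) := WithLp.linearEquiv 2 ℝ (Fin t → ℝ) with hL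
  set e : (Fin t → ℤ) → E := fun p => L.symm (fun i => (p i : ℝ)) with he
  have h0 : (0 : E) ∉ convexHull ℝ (e '' ↑P) := by
    intro hx
    obtain ⟨ι, hι, z, w, hz, hind, hwpos, hw1, hwz⟩ := eq_pos_convex_span_of_mem_convexHull hx
    letI := hι
    replace hw1 : ∑ i : ι, w i = 1 := hw1
    replace hwz : ∑ i : ι, w i • z i = 0 := hwz
    haveI : Nonempty ι := by
      by_contra hne
      haveI := not_nonempty_iff.1 hne
      rw [Finset.univ_eq_empty, Finset.sum_empty] at hw1
      norm_num at hw1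
    have hzmem : ∀ i : ι, z i ∈ e '' ↑P := fun i => hz ⟨i, rfl⟩
    choose pt hptP hpte using hzmem
    have hzc : ∀ i k, L (z i) k = (pt i k : ℝ) := by
      intro i k
      rw [← hpte i, he]
      simp
    have hcoord : ∀ k, ∑ i : ι, w i * (pt i k : ℝ) = 0 := by
      intro k
      have h1 : ∑ i : ι, w i • L (z i) = 0 := by
        have := congrArg L hwz
        simpa [map_sum, map_smul] using this
      have h2 := congrFun h1 k
      rw [Finset.sum_apply] at h2
      simpa [hzc] using h2
    set c : ι → (Fin (t+1) → ℚ) := fun i => Fin.cons 1 (fun k => (pt i k : ℚ)) with hc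
    set b : Fin (t+1) → ℚ := Fin.cons 1 0 with hb
    have hbspan : castVec b ∈ Submodule.span ℝ (castVec '' Set.range c) := by
      have hsum : castVec b = ∑ i : ι, w i • castVec (c i) := by
        funext j
        rw [Finset.sum_apply]
        refine Fin.cases ?_ ?_ j
        · simpa [castVec, hb, hc] using hw1.symm
        · intro k
          simpa [castVec, hb, hc] using (hcoord k).symm
      rw [hsum]
      exact Submodule.sum_mem _ fun i _ =>
        Submodule.smul_mem _ _ (Submodule.subset_span ⟨c i, Set.mem_range_self i, rfl⟩)
    have hbq : b ∈ Submodule.span ℚ (Set.range c) := rat_mem_span _ _ hbspan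
    obtain ⟨m', hm'⟩ := (Submodule.mem_span_range_iff_exists_fun ℚ).1 hbq
    have hm'1 : ∑ i : ι, m' i = 1 := by
      have := congrFun hm' 0
      rw [Finset.sum_apply] at this
      simpa [hc, hb] using this
    have hm'k : ∀ k, ∑ i : ι, m' i * (pt i k : ℚ) = 0 := by
      intro k
      have := congrFun hm' k.succ
      rw [Finset.sum_apply] at this
      simpa [hc, hb] using this
    have hz0' : ∑ i : ι, ((m' i : ℝ)) • L (z i) = 0 := by
      funext k
      rw [Finset.sum_apply]
      have := congrArg (fun q : ℚ => (q : ℝ)) (hm'k k)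
      push_cast at this
      simpa [hzc] using this
    have hz0 : ∑ i : ι, ((m' i : ℝ)) • z i = 0 := by
      apply L.injective
      simpa [map_sum, map_smul] using hz0'
    have hweq : ∀ i, w i = (m' i : ℝ) := by
      have hsub1 : ∑ i : ι, (w i - (m' i : ℝ)) = 0 := by
        rw [Finset.sum_sub_distrib, hw1]
        have hcast : ∑ i : ι, ((m' i : ℝ)) = ((∑ i : ι, m' i : ℚ) : ℝ) := by push_cast; rfl
        rw [hcast, hm'1]
        norm_num
      have hsub2 : ∑ i : ι, (w i - (m' i : ℝ)) • z i = 0 := by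
        simp only [sub_smul]
        rw [Finset.sum_sub_distrib, hwz, hz0, sub_zero]
      intro i
      have := affineIndependent_iff.1 hind Finset.univ _ hsub1 hsub2 i (Finset.mem_univ i)
      linarith [this]
    have hm'pos : ∀ i, 0 < m' i := by
      intro i
      have h := hwpos i
      rw [hweq i] at h
      exact_mod_cast h
    set d : ℕ := ∏ i : ι, (m' i).den with hd
    have hdpos : 0 < d := Finset.prod_pos fun i _ => (m' i).pos
    have hddvd : ∀ i, (m' i).den ∣ d := fun i => Finset.dvd_prod_of_mem _ (Finset.mem_univ i)
    set ni : ι → ℕ := fun i => (d / (m' i).den) * (m' i).num.toNat with hni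
    have hni_cast : ∀ i, ((ni i : ℚ)) = (d : ℚ) * m' i := by
      intro i
      obtain ⟨k, hk⟩ := hddvd i
      have hden0 : ((m' i).den : ℚ) ≠ 0 := by
        exact_mod_cast (m' i).den_nz
      have hnum : (((m' i).num.toNat : ℤ) : ℚ) = ((m' i).num : ℚ) := by
        rw [Int.toNat_of_nonneg (le_of_lt (Rat.num_pos.2 (hm'pos i)))]
      have hdiv : d / (m' i).den = k := by
        rw [hk]
        exact Nat.mul_div_cancel_left k (m' i).pos
      have hnd := Rat.num_div_den (m' i)
      rw [div_eq_iff hden0] at hnd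
      have hnum' : (((m' i).num.toNat : ℕ) : ℚ) = ((m' i).num : ℚ) := by exact_mod_cast hnum
      show (((d / (m' i).den * (m' i).num.toNat : ℕ)) : ℚ) = (d : ℚ) * m' i
      rw [hdiv, hk]
      push_cast [hnum']
      linear_combination (k : ℚ) * hnd
    have hnipos : ∀ i, 0 < ni i := by
      intro i
      have hq : (0 : ℚ) < (ni i : ℚ) := by
        rw [hni_cast]
        exact mul_pos (by exact_mod_cast hdpos) (hm'pos i)
      exact_mod_cast hq
    set mm : (Fin t → ℤ) → ℕ := fun q => ∑ i : ι, if pt i = q then ni i else 0 with hmm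
    have hmsum : ∑ p ∈ P, (mm p : ℤ) • p = 0 := by
      have hkey : ∑ p ∈ P, (mm p : ℤ) • p = ∑ i : ι, (ni i : ℤ) • pt i := by
        have hcast : ∀ p, ((mm p : ℤ)) = ∑ i : ι, if pt i = p then (ni i : ℤ) else 0 := by
          intro p
          rw [hmm]
          push_cast
          exact Finset.sum_congr rfl fun i _ => by split <;> simp
        calc ∑ p ∈ P, (mm p : ℤ) • p
            = ∑ p ∈ P, ∑ i : ι, (if pt i = p then (ni i : ℤ) else 0) • p := by
              refine Finset.sum_congr rfl fun p _ => ?_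
              rw [hcast, Finset.sum_smul]
          _ = ∑ i : ι, ∑ p ∈ P, (if pt i = p then (ni i : ℤ) else 0) • p := Finset.sum_comm
          _ = ∑ i : ι, (ni i : ℤ) • pt i := by
              refine Finset.sum_congr rfl fun i _ => ?_
              have : ∀ p ∈ P, (if pt i = p then (ni i : ℤ) else 0) • p
                  = if pt i = p then (ni i : ℤ) • p else 0 := by
                intro p _
                split <;> simp
              rw [Finset.sum_congr rfl this, Finset.sum_ite_eq]
              rw [if_pos (Finset.mem_coe.1 (hptP i))]
      rw [hkey]
      funext k
      have hq : ((∑ i : ι, (ni i : ℤ) * pt i k : ℤ) : ℚ) = 0 := by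
        push_cast
        calc ∑ i : ι, (ni i : ℚ) * (pt i k : ℚ)
            = ∑ i : ι, (d : ℚ) * (m' i * (pt i k : ℚ)) := by
              refine Finset.sum_congr rfl fun i _ => ?_
              rw [hni_cast]
              ring
          _ = (d : ℚ) * ∑ i : ι, m' i * (pt i k : ℚ) := by rw [Finset.mul_sum]
          _ = 0 := by rw [hm'k k, mul_zero]
      have hzk : ∑ i : ι, (ni i : ℤ) * pt i k = 0 := by exact_mod_cast hq
      calc (∑ i : ι, (ni i : ℤ) • pt i) k = ∑ i : ι, (ni i : ℤ) * pt i k := by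
            rw [Finset.sum_apply]
            rfl
        _ = 0 := hzk
    obtain ⟨i0⟩ := (inferInstance : Nonempty ι)
    have hz0' := hP mm hmsum (pt i0) (hptP i0)
    rw [hmm] at hz0'
    have := Finset.sum_eq_zero_iff.1 hz0' i0 (Finset.mem_univ i0)
    simp only [if_pos rfl] at this
    exact (hnipos i0).ne' this
  have hfin : (e '' ↑P).Finite := P.finite_toSet.image e
  obtain ⟨f, u, hu0, hu⟩ := geometric_hahn_banach_point_closed (convex_convexHull ℝ _)
      (hfin.isClosed_convexHull (𝕜 := ℝ)) h0
  have hupos : 0 < u := by simpa using hu0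
  set δ : Fin t → (Fin t → ℝ) := fun i => Pi.single i (1 : ℝ) with hδ
  refine ⟨fun i => f (L.symm (δ i)), ?_⟩
  intro p hp
  have hmem : e p ∈ convexHull ℝ (e '' ↑P) :=
    subset_convexHull _ _ ⟨p, by simpa using hp, rfl⟩
  have hfp : u < f (e p) := hu _ hmem
  have hval : f (e p) = ∑ i, (p i : ℝ) * f (L.symm (δ i)) := by
    have h1 : (fun k => ((p k : ℝ))) = ∑ i, (p i : ℝ) • δ i := by
      funext k
      rw [Finset.sum_apply]
      simp [hδ, Pi.single_apply, mul_ite]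
    calc f (e p) = f (L.symm (fun k => (p k : ℝ))) := rfl
      _ = f (L.symm (∑ i, (p i : ℝ) • δ i)) := by rw [← h1]
      _ = ∑ i, (p i : ℝ) * f (L.symm (δ i)) := by
          rw [map_sum, map_sum]
          refine Finset.sum_congr rfl fun i _ => ?_
          rw [map_smul, map_smul, smul_eq_mul]
  rw [← hval]
  linarith

private lemma zsmul_nonpos_iff_pos {G : Type*} [AddCommGroup G] [LinearOrder G] [IsOrderedAddMonoid G] {c : ℤ}
    (hc : 0 < c) {x : G} : c • x ≤ 0 ↔ x ≤ 0 := by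
  constructor
  · intro h
    by_contra hx
    push_neg at hx
    exact absurd h (not_le.2 (zsmul_pos hx hc))
  · intro h
    have h2 : 0 ≤ c • (-x) := zsmul_nonneg (neg_nonneg.2 h) hc.le
    rw [smul_neg] at h2
    exact neg_nonneg.1 h2

private lemma main_aux {G : Type*} [AddCommGroup G] [LinearOrder G] [IsOrderedAddMonoid G] :
    ∀ (t : ℕ) (g : Fin t → G) (B : ℤ),
      ∃ gr : Fin t → ℝ, ∀ α : Fin t → ℤ, (∀ i, |α i| ≤ B) →
        ((∑ i, α i • g i) ≤ 0 ↔ (∑ i, (α i : ℝ) * gr i) ≤ 0) := by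
  intro t
  induction t with
  | zero => exact fun g B => ⟨fun _ => 0, fun α _ => by simp⟩
  | succ s ih =>
    intro g B
    by_cases hker : ∃ a : Fin (s+1) → ℤ, (∀ i, |a i| ≤ B) ∧ a ≠ 0 ∧ ∑ i, a i • g i = 0
    · obtain ⟨a0, ha0B, ha0ne, ha0sum⟩ := hker
      obtain ⟨j, hj⟩ : ∃ j, a0 j ≠ 0 := by
        by_contra h
        push_neg at h
        exact ha0ne (funext fun i => h i)
      obtain ⟨a, haB, hasum, hapos⟩ :
          ∃ a : Fin (s+1) → ℤ, (∀ i, |a i| ≤ B) ∧ (∑ i, a i • g i = 0) ∧ 0 < a j := by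
        rcases hj.lt_or_gt with h | h
        · refine ⟨-a0, fun i => by rw [Pi.neg_apply, abs_neg]; exact ha0B i, ?_, by
            simpa using h⟩
          simp only [Pi.neg_apply, neg_smul]
          rw [Finset.sum_neg_distrib, ha0sum, neg_zero]
        · exact ⟨a0, ha0B, ha0sum, h⟩
      obtain ⟨gr', hgr'⟩ := ih (fun i => g (j.succAbove i)) (B * B + B * B)
      set gr : Fin (s+1) → ℝ :=
        j.insertNth (-∑ i, (a (j.succAbove i) : ℝ) * gr' i) (fun i => ((a j : ℝ)) * gr' i)
        with hgrdef
      refine ⟨gr, ?_⟩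
      intro α hα
      set β : Fin s → ℤ := fun i => a j * α (j.succAbove i) - α j * a (j.succAbove i) with hβ
      have hBnn : (0 : ℤ) ≤ B := (abs_nonneg (a j)).trans (haB j)
      have hβB : ∀ i, |β i| ≤ B * B + B * B := by
        intro i
        have h1 : |a j * α (j.succAbove i)| ≤ B * B := by
          rw [abs_mul]
          exact mul_le_mul (haB j) (hα _) (abs_nonneg _) hBnn
        have h2 : |α j * a (j.succAbove i)| ≤ B * B := by
          rw [abs_mul]
          exact mul_le_mul (hα j) (haB _) (abs_nonneg _) hBnn
        calc |β i| = |a j * α (j.succAbove i) - α j * a (j.succAbove i)| := rfl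
          _ ≤ |a j * α (j.succAbove i)| + |α j * a (j.succAbove i)| := by
              rw [sub_eq_add_neg]
              refine (abs_add_le _ _).trans ?_
              rw [abs_neg]
          _ ≤ B * B + B * B := add_le_add h1 h2
      have hsAbove : ∑ i, a (j.succAbove i) • g (j.succAbove i) = -(a j • g j) := by
        have h := (Fin.sum_univ_succAbove (fun i => a i • g i) j).symm.trans hasum
        exact eq_neg_of_add_eq_zero_right h
      have key1 : ∑ i, β i • g (j.succAbove i) = a j • ∑ i, α i • g i := by
        have expand : ∑ i, β i • g (j.succAbove i)
            = a j • (∑ i, α (j.succAbove i) • g (j.succAbove i))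
              - α j • (∑ i, a (j.succAbove i) • g (j.succAbove i)) := by
          rw [Finset.smul_sum, Finset.smul_sum, ← Finset.sum_sub_distrib]
          refine Finset.sum_congr rfl fun i _ => ?_
          rw [hβ, sub_smul, smul_smul, smul_smul]
        rw [expand, hsAbove, Fin.sum_univ_succAbove (fun i => α i • g i) j, smul_add,
          smul_neg, sub_neg_eq_add, smul_comm (α j) (a j) (g j)]
        abel
      have key2 : ∑ i, (β i : ℝ) * gr' i = ∑ i, (α i : ℝ) * gr i := by
        rw [Fin.sum_univ_succAbove (fun i => (α i : ℝ) * gr i) j]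
        simp only [hgrdef, Fin.insertNth_apply_same, Fin.insertNth_apply_succAbove]
        calc ∑ i, (β i : ℝ) * gr' i
            = ∑ i, (((α (j.succAbove i) : ℝ)) * ((a j : ℝ) * gr' i)
                + (α j : ℝ) * -((a (j.succAbove i) : ℝ) * gr' i)) := by
              refine Finset.sum_congr rfl fun i _ => ?_
              rw [hβ]
              push_cast
              ring
          _ = ∑ i, (α (j.succAbove i) : ℝ) * ((a j : ℝ) * gr' i)
              + (α j : ℝ) * -∑ i, (a (j.succAbove i) : ℝ) * gr' i := by
              rw [Finset.sum_add_distrib, ← Finset.mul_sum]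
              rw [← Finset.sum_neg_distrib, Finset.mul_sum]
          _ = (α j : ℝ) * -∑ i, (a (j.succAbove i) : ℝ) * gr' i
              + ∑ i, (α (j.succAbove i) : ℝ) * ((a j : ℝ) * gr' i) := by ring
      constructor
      · intro h
        have h2 : ∑ i, β i • g (j.succAbove i) ≤ 0 := by
          rw [key1]
          exact (zsmul_nonpos_iff_pos hapos).2 h
        have h3 := (hgr' β hβB).1 h2
        rw [key2] at h3
        exact h3
      · intro h
        rw [← key2] at h
        have h3 := (hgr' β hβB).2 h
        rw [key1] at h3
        exact (zsmul_nonpos_iff_pos hapos).1 h3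
    · push_neg at hker
      classical
      set box : Finset (Fin (s+1) → ℤ) := Finset.Icc (fun _ => -B) (fun _ => B) with hbox
      have hmem_box : ∀ α : Fin (s+1) → ℤ, (∀ i, |α i| ≤ B) ↔ α ∈ box := by
        intro α
        rw [hbox, Finset.mem_Icc]
        constructor
        · intro h
          exact ⟨fun i => (abs_le.1 (h i)).1, fun i => (abs_le.1 (h i)).2⟩
        · rintro ⟨h1, h2⟩ i
          exact abs_le.2 ⟨h1 i, h2 i⟩
      set P : Finset (Fin (s+1) → ℤ) := box.filter (fun α => 0 < ∑ i, α i • g i) with hPdef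
      have hPprop : ∀ m : (Fin (s+1) → ℤ) → ℕ,
          (∑ p ∈ P, (m p : ℤ) • p) = 0 → ∀ p ∈ P, m p = 0 := by
        intro m hm p hp
        by_contra hmp
        set v : (Fin (s+1) → ℤ) →ₗ[ℤ] G := Fintype.linearCombination ℤ g with hvdef
        have happ : ∀ w : Fin (s+1) → ℤ, v w = ∑ i, w i • g i := fun w => rfl
        have hv0 : ∑ q ∈ P, (m q : ℤ) • v q = 0 := by
          calc ∑ q ∈ P, (m q : ℤ) • v q = v (∑ q ∈ P, (m q : ℤ) • q) := by
                rw [map_sum]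
                exact Finset.sum_congr rfl fun q _ => (map_smul v _ _).symm
            _ = 0 := by rw [hm, map_zero]
        have hpos : 0 < ∑ q ∈ P, (m q : ℤ) • v q := by
          refine Finset.sum_pos' (fun q hq => ?_) ⟨p, hp, ?_⟩
          · have hq2 := (Finset.mem_filter.1 hq).2
            rw [happ]
            exact zsmul_nonneg (le_of_lt hq2) (Int.natCast_nonneg _)
          · have hp2 := (Finset.mem_filter.1 hp).2
            rw [happ]
            exact zsmul_pos hp2 (by exact_mod_cast Nat.pos_of_ne_zero hmp)
        exact absurd hv0 hpos.ne'
      obtain ⟨gr, hgr⟩ := gordan P hPprop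
      refine ⟨gr, ?_⟩
      intro α hα
      have hαbox := (hmem_box α).1 hα
      rcases lt_trichotomy (∑ i, α i • g i) 0 with hlt | heq | hgt
      · have hneg : -α ∈ P := by
          rw [hPdef, Finset.mem_filter]
          refine ⟨(hmem_box (-α)).1 fun i => by rw [Pi.neg_apply, abs_neg]; exact hα i, ?_⟩
          simp only [Pi.neg_apply, neg_smul]
          rw [Finset.sum_neg_distrib]
          exact neg_pos.2 hlt
        have hg2 := hgr _ hneg
        simp only [Pi.neg_apply, Int.cast_neg, neg_mul] at hg2
        rw [Finset.sum_neg_distrib] at hg2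
        have : ∑ i, (α i : ℝ) * gr i < 0 := by linarith
        exact ⟨fun _ => this.le, fun _ => hlt.le⟩
      · have hz : α = 0 := by
          by_contra hne
          exact hker α hα hne heq
        subst hz
        simp
      · have hmemP : α ∈ P := by
          rw [hPdef, Finset.mem_filter]
          exact ⟨hαbox, hgt⟩
        have hg2 := hgr _ hmemP
        constructor
        · intro h
          exact absurd h (not_le.2 hgt)
        · intro h
          linarith


/-- For elements `g 0, …, g (t-1)` of a linearly ordered abelian group
`G` and naturals `N, n`, there are reals `gr 0, …, gr (t-1)` such that for all integer
coefficients `α` with `|αᵢ| ≤ 2(N+n)` for every `i`: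
`∑ αᵢ • gᵢ ≤ 0` in `G` iff `∑ αᵢ · grᵢ ≤ 0` in `ℝ`. -/
theorem stmt2 {G : Type*} [AddCommGroup G] [LinearOrder G] [IsOrderedAddMonoid G] {t : ℕ}
    (g : Fin t → G) (N n : ℕ) :
    ∃ gr : Fin t → ℝ, ∀ α : Fin t → ℤ, (∀ i, |α i| ≤ 2 * ((N : ℤ) + n)) →
      ((∑ i, α i • g i) ≤ 0 ↔ (∑ i, (α i : ℝ) * gr i) ≤ 0) := by
  exact main_aux t g (2 * ((N : ℤ) + n))
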